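/- Let (D, g, h) be a winnable Czech hat game, let Y be a clique (any two distinct members of Y have arcs in both directions between them), and let p, q be integers with 0 < q < p. Form the game on Option V by attaching a new vertex x universal to Y with hatness h x = p and guessness g x = q, and replacing, for each v ∈ Y, the hatness h v by h v · p and the guessness g v by g v · (p − q), leaving all other values unchanged. The resulting Czech game is winnable. -/

import Mathlib

open Finset

section CzechAux

variable {V : Type*} (h : V → ℕ) (Y : Set V) [DecidablePred (· ∈ Y)] (p : ℕ)

/-- Decoding equivalence for a clique vertex. -/
def decY (v : V) (hv : v ∈ Y) :
    Fin (if v ∈ Y then h v * p else h v) ≃ Fin (h v) × Fin p :=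
  (finCongr (if_pos hv)).trans finProdFinEquiv.symm

/-- Decoding equivalence for a non-clique vertex. -/
def decN (v : V) (hv : v ∉ Y) :
    Fin (if v ∈ Y then h v * p else h v) ≃ Fin (h v) :=
  finCongr (if_neg hv)

variable (c : ∀ a : Option V, Fin (Option.elim a p fun v => if v ∈ Y then h v * p else h v))

/-- First component of the decoded coloring. -/
noncomputable def c1 : ∀ u : V, Fin (h u) := fun u =>
  if hu : u ∈ Y then (decY h Y p u hu (c (some u))).1 else decN h Y p u hu (c (some u))

variable [NeZero p] (e : ZMod p ≃ Fin p)

/-- Second component of the decoded coloring, as an element of `ZMod p`. -/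
noncomputable def c2 : V → ZMod p := fun u =>
  if hu : u ∈ Y then e.symm (decY h Y p u hu (c (some u))).2 else 0

variable [Fintype V]

/-- Sum of second components over the clique (0 outside). -/
noncomputable def smC : ZMod p := ∑ u, c2 h Y p c e u

variable (q : ℕ)

/-- The guess set (inside `ZMod p`) of the new vertex. -/
noncomputable def AsetX : Finset (ZMod p) :=
  (Finset.range q).image fun i : ℕ => smC h Y p c e + (i : ZMod p)

/-- The excluded set (inside `ZMod p`) for a clique vertex `v`. -/
noncomputable def AsetV (v : V) : Finset (ZMod p) :=
  (Finset.range q).image fun i : ℕ =>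
    e.symm (c none) - (smC h Y p c e - c2 h Y p c e v) - (i : ZMod p)

lemma natCast_injOn_range {p q : ℕ} [NeZero p] (hq : q ≤ p) {i j : ℕ}
    (hi : i < q) (hj : j < q) (hij : (i : ZMod p) = (j : ZMod p)) : i = j := by
  have h1 := congrArg ZMod.val hij
  rwa [ZMod.val_cast_of_lt (hi.trans_le hq), ZMod.val_cast_of_lt (hj.trans_le hq)] at h1

lemma card_AsetX (hq : q ≤ p) : (AsetX h Y p c e q).card = q := by
  rw [AsetX, Finset.card_image_of_injOn, Finset.card_range]
  intro i hi j hj hij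
  simp only [Finset.mem_coe, Finset.mem_range] at hi hj
  exact natCast_injOn_range hq hi hj (add_left_cancel hij)

lemma card_AsetV (hq : q ≤ p) (v : V) : (AsetV h Y p c e q v).card = q := by
  rw [AsetV, Finset.card_image_of_injOn, Finset.card_range]
  intro i hi j hj hij
  simp only [Finset.mem_coe, Finset.mem_range] at hi hj
  exact natCast_injOn_range hq hi hj (sub_right_injective hij)

lemma c1_congr (u : V)
    (c' : ∀ a : Option V, Fin (Option.elim a p fun v => if v ∈ Y then h v * p else h v))
    (H : c (some u) = c' (some u)) : c1 h Y p c u = c1 h Y p c' u := by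
  simp only [c1, H]

lemma c2_congr (u : V)
    (c' : ∀ a : Option V, Fin (Option.elim a p fun v => if v ∈ Y then h v * p else h v))
    (H : u ∈ Y → c (some u) = c' (some u)) : c2 h Y p c e u = c2 h Y p c' e u := by
  by_cases hu : u ∈ Y
  · simp only [c2, dif_pos hu, H hu]
  · simp only [c2, dif_neg hu]

lemma smC_sub [DecidableEq V] (v : V) :
    smC h Y p c e - c2 h Y p c e v = ∑ u ∈ Finset.univ.erase v, c2 h Y p c e u := by
  rw [smC, ← Finset.add_sum_erase _ _ (Finset.mem_univ v), add_sub_cancel_left]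

/-- The strategy in the extended game. -/
noncomputable def strat (F : ∀ v : V, (∀ u : V, Fin (h u)) → Finset (Fin (h v))) :
    ∀ a : Option V,
      (∀ u : Option V, Fin (Option.elim u p fun v => if v ∈ Y then h v * p else h v)) →
      Finset (Fin (Option.elim a p fun v => if v ∈ Y then h v * p else h v))
  | none => fun c => (AsetX h Y p c e q).map e.toEmbedding
  | some v => fun c =>
      if hv : v ∈ Y then
        ((F v (c1 h Y p c)) ×ˢ ((AsetV h Y p c e q v)ᶜ.map e.toEmbedding)).map
          (decY h Y p v hv).symm.toEmbedding
      else (F v (c1 h Y p c)).map (decN h Y p v hv).symm.toEmbedding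

end CzechAux

/-- A Czech hat game on the digraph with adjacency `D` (sage `v` sees sage `u`
iff `D v u`), guessness `g`, and hatness `h`, is winnable: there is a strategy
assigning to each sage `v` a set of `g v` guesses, depending only on the hats
she sees, such that for every coloring some sage guesses her own hat color. -/
def HatGame.Winnable {V : Type*} (D : V → V → Prop) (g h : V → ℕ) : Prop :=
  ∃ F : ∀ v : V, (∀ u : V, Fin (h u)) → Finset (Fin (h v)),
    (∀ (v : V) (c c' : ∀ u : V, Fin (h u)),
        (∀ u : V, D v u → c u = c' u) → F v c = F v c') ∧
    (∀ (v : V) (c : ∀ u : V, Fin (h u)), (F v c).card = g v) ∧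
    (∀ c : ∀ u : V, Fin (h u), ∃ v : V, c v ∈ F v c)

/-- Attaching a vertex with hatness `p`, guessness `q` universal to a clique
`Y`, multiplying hatnesses in `Y` by `p` and guessnesses by `p - q`,
preserves winnability. -/
theorem czech_attach_to_clique {V : Type*} [Fintype V]
    (D : V → V → Prop) (hloop : ∀ v, ¬ D v v)
    (g h : V → ℕ) (hgh : ∀ v, 0 < g v ∧ g v < h v)
    (Y : Set V) [DecidablePred (· ∈ Y)]
    (hclique : ∀ u ∈ Y, ∀ v ∈ Y, u ≠ v → D u v)
    (p q : ℕ) (hq : 0 < q) (hpq : q < p)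
    (hw : HatGame.Winnable D g h) :
    HatGame.Winnable
      (fun a b : Option V =>
        match a, b with
        | none, some v => v ∈ Y
        | some v, none => v ∈ Y
        | some u, some v => D u v
        | none, none => False)
      (fun a => a.elim q (fun v => if v ∈ Y then g v * (p - q) else g v))
      (fun a => a.elim p (fun v => if v ∈ Y then h v * p else h v)) := by
  classical
  haveI : NeZero p := ⟨by omega⟩
  obtain ⟨F, Fmem, Fcard, Fwin⟩ := hw
  set e : ZMod p ≃ Fin p := Fintype.equivFinOfCardEq (ZMod.card p) with he
  refine ⟨strat h Y p e q F, ?_, ?_, ?_⟩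
  · -- invariance
    intro v c c' H
    cases v with
    | none =>
        have hs : smC h Y p c e = smC h Y p c' e :=
          Finset.sum_congr rfl fun u _ =>
            c2_congr h Y p c e u c' (fun hu => H (some u) hu)
        simp only [strat, AsetX, hs]
    | some v =>
        by_cases hv : v ∈ Y
        · have hF : F v (c1 h Y p c) = F v (c1 h Y p c') :=
            Fmem v _ _ fun u hu => c1_congr h Y p c u c' (H (some u) hu)
          have hnone : c none = c' none := H none hv
          have hsub : smC h Y p c e - c2 h Y p c e v
              = smC h Y p c' e - c2 h Y p c' e v := by
            rw [smC_sub, smC_sub]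
            refine Finset.sum_congr rfl fun u hu => ?_
            refine c2_congr h Y p c e u c' fun huY => ?_
            exact H (some u) (hclique v hv u huY (Ne.symm (Finset.mem_erase.mp hu).1))
          have hA : AsetV h Y p c e q v = AsetV h Y p c' e q v := by
            simp only [AsetV, hnone, hsub]
          simp only [strat, dif_pos hv, hF, hA]
        · have hF : F v (c1 h Y p c) = F v (c1 h Y p c') :=
            Fmem v _ _ fun u hu => c1_congr h Y p c u c' (H (some u) hu)
          simp only [strat, dif_neg hv, hF]
  · -- cards
    intro v c
    cases v with
    | none =>
        show ((AsetX h Y p c e q).map e.toEmbedding).card = q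
        rw [Finset.card_map, card_AsetX h Y p c e q hpq.le]
    | some v =>
        by_cases hv : v ∈ Y
        · show (if hv : v ∈ Y then
              ((F v (c1 h Y p c)) ×ˢ ((AsetV h Y p c e q v)ᶜ.map e.toEmbedding)).map
                (decY h Y p v hv).symm.toEmbedding
            else (F v (c1 h Y p c)).map (decN h Y p v hv).symm.toEmbedding).card
            = if v ∈ Y then g v * (p - q) else g v
          conv_rhs => rw [if_pos hv]
          simp only [dif_pos hv]
          rw [Finset.card_map, Finset.card_product, Fcard,
            Finset.card_map, Finset.card_compl, ZMod.card,
            card_AsetV h Y p c e q hpq.le v]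
        · show (if hv : v ∈ Y then
              ((F v (c1 h Y p c)) ×ˢ ((AsetV h Y p c e q v)ᶜ.map e.toEmbedding)).map
                (decY h Y p v hv).symm.toEmbedding
            else (F v (c1 h Y p c)).map (decN h Y p v hv).symm.toEmbedding).card
            = if v ∈ Y then g v * (p - q) else g v
          conv_rhs => rw [if_neg hv]
          simp only [dif_neg hv]
          rw [Finset.card_map, Fcard]
  · -- winning
    intro c
    by_cases hx : ∃ i ∈ Finset.range q, e.symm (c none) = smC h Y p c e + (i : ZMod p)
    · refine ⟨none, ?_⟩
      show c none ∈ (AsetX h Y p c e q).map e.toEmbedding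
      refine Finset.mem_map_equiv.mpr ?_
      obtain ⟨i, hi, hie⟩ := hx
      exact Finset.mem_image.mpr ⟨i, hi, hie.symm⟩
    · obtain ⟨w, hwF⟩ := Fwin (c1 h Y p c)
      refine ⟨some w, ?_⟩
      by_cases hw : w ∈ Y
      · show c (some w) ∈ (if hw : w ∈ Y then
            ((F w (c1 h Y p c)) ×ˢ ((AsetV h Y p c e q w)ᶜ.map e.toEmbedding)).map
              (decY h Y p w hw).symm.toEmbedding
          else (F w (c1 h Y p c)).map (decN h Y p w hw).symm.toEmbedding)
        rw [dif_pos hw]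
        refine Finset.mem_map_equiv.mpr ?_
        change (decY h Y p w hw) (c (some w)) ∈ _
        rw [Finset.mem_product]
        constructor
        · have h1 : (decY h Y p w hw (c (some w))).1 = c1 h Y p c w := by
            simp only [c1, dif_pos hw]
          rw [← h1] at hwF
          exact hwF
        · rw [Finset.mem_map_equiv, Finset.mem_compl]
          intro hmem
          obtain ⟨i, hi, hie⟩ := Finset.mem_image.mp hmem
          apply hx
          refine ⟨i, hi, ?_⟩
          have h2 : e.symm (decY h Y p w hw (c (some w))).2 = c2 h Y p c e w := by
            simp only [c2, dif_pos hw]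
          have hie' : e.symm (c none) - (smC h Y p c e - c2 h Y p c e w) - (i : ZMod p)
              = c2 h Y p c e w := hie.trans h2
          rw [sub_sub, sub_eq_iff_eq_add] at hie'
          rw [hie']; ring
      · show c (some w) ∈ (if hw : w ∈ Y then
            ((F w (c1 h Y p c)) ×ˢ ((AsetV h Y p c e q w)ᶜ.map e.toEmbedding)).map
              (decY h Y p w hw).symm.toEmbedding
          else (F w (c1 h Y p c)).map (decN h Y p w hw).symm.toEmbedding)
        rw [dif_neg hw]
        refine Finset.mem_map_equiv.mpr ?_
        change (decN h Y p w hw) (c (some w)) ∈ _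
        have h1 : decN h Y p w hw (c (some w)) = c1 h Y p c w := by
          simp only [c1, dif_neg hw]
        rw [← h1] at hwF
        exact hwF
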